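/- arXiv:1506.06184 — 7 statements merged into one kernel-verified Lean document; each statement's English description precedes it below -/
import Mathlib

section
/- Let R be a ring with 1 ≠ 0, Λ a partially ordered set, and J the free left R-module with basis e_{αβ} indexed by pairs α < β, with multiplication defined by e_{αβ}·e_{βγ} = e_{αγ} and e_{αβ}·e_{γδ} = 0 when β ≠ γ, extended R-bilinearly. Then J is a nil ring: every element of J is nilpotent. -/
/-!
McLain's ring `J`: the free left `R`-module with basis `e_{αβ}` indexed by
`Φ = {(α,β) : α < β}`, with multiplication `e_{αβ} e_{βγ} = e_{αγ}` and
`e_{αβ} e_{γδ} = 0` for `β ≠ γ`, extended `R`-bilinearly.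
-/

/-- The index set `Φ` of pairs `α < β`. -/
def McLainPhi (Λ : Type*) [PartialOrder Λ] := {p : Λ × Λ // p.1 < p.2}

/-- The free left `R`-module `J` on basis `Φ`. -/
def McLainJ (R : Type*) [Ring R] (Λ : Type*) [PartialOrder Λ] := McLainPhi Λ →₀ R

noncomputable instance (R : Type*) [Ring R] (Λ : Type*) [PartialOrder Λ] :
    AddCommGroup (McLainJ R Λ) := inferInstanceAs (AddCommGroup (McLainPhi Λ →₀ R))

/-- The bilinear multiplication on `J` determined by
`e_{αβ} e_{βγ} = e_{αγ}`, `e_{αβ} e_{γδ} = 0` if `β ≠ γ`. -/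
noncomputable def McLainJ.mul {R : Type*} [Ring R] {Λ : Type*} [PartialOrder Λ]
    [DecidableEq Λ] (x y : McLainJ R Λ) : McLainJ R Λ :=
  Finsupp.sum x fun p r => Finsupp.sum y fun q s =>
    if h : p.1.2 = q.1.1 then
      Finsupp.single (⟨(p.1.1, q.1.2), lt_trans (lt_of_lt_of_eq p.2 h) q.2⟩ : McLainPhi Λ)
        (r * s)
    else 0

/-- Powers with respect to the multiplication of `J`: `pow x n = x^(n+1)`. -/
noncomputable def McLainJ.pow {R : Type*} [Ring R] {Λ : Type*} [PartialOrder Λ]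
    [DecidableEq Λ] (x : McLainJ R Λ) : ℕ → McLainJ R Λ
  | 0 => x
  | n + 1 => McLainJ.mul x (McLainJ.pow x n)

section Aux
variable {R : Type*} [Ring R] {Λ : Type*} [PartialOrder Λ] [DecidableEq Λ]

instance : DecidableEq (McLainPhi Λ) :=
  inferInstanceAs (DecidableEq {p : Λ × Λ // p.1 < p.2})

lemma McLainJ.mem_support_mul (x y : McLainJ R Λ) (q : McLainPhi Λ)
    (hq : q ∈ ((McLainJ.mul x y : McLainJ R Λ) : McLainPhi Λ →₀ R).support) :
    ∃ p ∈ (x : McLainPhi Λ →₀ R).support, ∃ p' ∈ (y : McLainPhi Λ →₀ R).support,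
      p.1.2 = p'.1.1 ∧ q.1.1 = p.1.1 ∧ q.1.2 = p'.1.2 := by
  have h := Finsupp.support_sum hq
  rw [Finset.mem_biUnion] at h
  obtain ⟨p, hp, h2⟩ := h
  have h3 := Finsupp.support_sum h2
  rw [Finset.mem_biUnion] at h3
  obtain ⟨p', hp', h4⟩ := h3
  refine ⟨p, hp, p', hp', ?_⟩
  split_ifs at h4 with hc
  · erw [dif_pos hc] at h4
    have := Finsupp.support_single_subset h4
    replace this := Finset.mem_singleton.mp this
    subst this
    exact ⟨hc, rfl, rfl⟩
  · erw [dif_neg hc] at h4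
    exact ((Finsupp.mem_support_iff.mp h4) rfl).elim

theorem mcLainJ_isNil' (x : McLainJ R Λ) : ∃ n : ℕ, McLainJ.pow x n = 0 := by
  set X : McLainPhi Λ →₀ R := x with hX
  set S : Finset Λ := X.support.image (fun p => p.1.1) ∪ X.support.image (fun p => p.1.2)
    with hS
  have key : ∀ n : ℕ, ∀ q ∈ ((McLainJ.pow x n : McLainJ R Λ) : McLainPhi Λ →₀ R).support,
      ∃ f : Fin (n+2) → Λ, StrictMono f ∧ (∀ i, f i ∈ S) ∧ f 0 = q.1.1 ∧ f (Fin.last (n+1)) = q.1.2 := by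
    intro n
    induction n with
    | zero =>
      intro q hq
      refine ⟨![q.1.1, q.1.2], ?_, ?_, rfl, rfl⟩
      · intro i j hij
        fin_cases i <;> fin_cases j <;> simp_all <;> exact q.2
      · intro i
        fin_cases i
        · exact Finset.mem_union_left _ (Finset.mem_image_of_mem _ hq)
        · exact Finset.mem_union_right _ (Finset.mem_image_of_mem _ hq)
    | succ n ih =>
      intro q hq
      obtain ⟨p, hp, p', hp', hmid, hq1, hq2⟩ := McLainJ.mem_support_mul x _ q hq
      obtain ⟨f, hf, hfS, hf0, hfl⟩ := ih p' hp'
      refine ⟨Fin.cons p.1.1 f, ?_, ?_, ?_, ?_⟩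
      · intro i j hij
        rcases Fin.eq_zero_or_eq_succ j with rfl | ⟨j', rfl⟩
        · exact absurd hij (Fin.not_lt_zero i)
        · rcases Fin.eq_zero_or_eq_succ i with rfl | ⟨i', rfl⟩
          · simp only [Fin.cons_zero, Fin.cons_succ]
            calc p.1.1 < p.1.2 := p.2
              _ = p'.1.1 := hmid
              _ = f 0 := hf0.symm
              _ ≤ f j' := hf.monotone (Fin.zero_le _)
          · simp only [Fin.cons_succ]
            exact hf (by rwa [Fin.succ_lt_succ_iff] at hij)
      · intro i
        rcases Fin.eq_zero_or_eq_succ i with rfl | ⟨i', rfl⟩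
        · exact Finset.mem_union_left _ (Finset.mem_image_of_mem _ hp)
        · exact hfS i'
      · rw [hq1]; rfl
      · rw [hq2, ← hfl]
        rfl
  refine ⟨S.card, ?_⟩
  by_contra h
  have : ∃ q, q ∈ ((McLainJ.pow x S.card : McLainJ R Λ) : McLainPhi Λ →₀ R).support := by
    rcases Finsupp.ne_iff.mp (show (McLainJ.pow x S.card : McLainPhi Λ →₀ R) ≠ 0 from h) with ⟨q, hq⟩
    exact ⟨q, Finsupp.mem_support_iff.mpr (by exact hq)⟩
  obtain ⟨q, hq⟩ := this
  obtain ⟨f, hf, hfS, -, -⟩ := key _ q hq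
  have hcard : (Finset.univ : Finset (Fin (S.card + 2))).card ≤ S.card :=
    Finset.card_le_card_of_injOn f (fun i _ => hfS i) (hf.injective.injOn)
  simp at hcard

end Aux

/-- `J` is a nil ring: every element of `J` is nilpotent. -/
theorem mcLainJ_isNil (R : Type*) [Ring R] [Nontrivial R] (Λ : Type*) [PartialOrder Λ]
    [DecidableEq Λ] (x : McLainJ R Λ) : ∃ n : ℕ, McLainJ.pow x n = 0 :=
  mcLainJ_isNil' x
end

section
/- For a closed subset Γ of Φ contained in a closed subset Γ₁, the pattern subgroup M(Γ) is a normal subgroup of M(Γ₁) if and only if Γ is normal in Γ₁, i.e., (α,β) ∈ Γ, (β,γ) ∈ Γ₁ implies (α,γ) ∈ Γ, and (α,β) ∈ Γ₁, (β,γ) ∈ Γ implies (α,γ) ∈ Γ. -/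
namespace McLain

/-- The endomorphism ring of the free right `R`-module on `Λ`. -/
abbrev E (R : Type*) [Ring R] (Λ : Type*) := Module.End Rᵐᵒᵖ (Λ →₀ R)

/-- Left multiplication by `r`, as an endomorphism of the right `R`-module `R`. -/
def lmul {R : Type*} [Ring R] (r : R) : R →ₗ[Rᵐᵒᵖ] R where
  toFun s := r * s
  map_add' := fun a b => mul_add r a b
  map_smul' := fun m s => by
    simp [MulOpposite.smul_eq_mul_unop, mul_assoc]

/-- The endomorphism corresponding to `r e_{αβ}`. -/
noncomputable def elt {R : Type*} [Ring R] {Λ : Type*} (α β : Λ) (r : R) : E R Λ :=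
  (Finsupp.lsingle α).comp ((lmul r).comp (Finsupp.lapply β))

/-- The unit `1 + r e_{αβ}` of `E`, for `α < β` (its inverse is `1 - r e_{αβ}`). -/
noncomputable def rootUnit {R : Type*} [Ring R] {Λ : Type*} [PartialOrder Λ]
    {α β : Λ} (h : α < β) (r : R) : (E R Λ)ˣ where
  val := 1 + elt α β r
  inv := 1 + elt α β (-r)
  val_inv := by
    apply LinearMap.ext; intro x
    simp [elt, lmul, Module.End.mul_apply, Finsupp.single_apply, h.ne, mul_add, add_assoc]
  inv_val := by
    apply LinearMap.ext; intro x
    simp [elt, lmul, Module.End.mul_apply, Finsupp.single_apply, h.ne, mul_add, add_assoc]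

/-- The pattern subgroup `M(Γ) = ⟨M_{αβ} : (α,β) ∈ Γ⟩`. -/
noncomputable def patternSubgroup (R : Type*) [Ring R] (Λ : Type*) [PartialOrder Λ]
    (Γ : Set (Λ × Λ)) : Subgroup (E R Λ)ˣ :=
  Subgroup.closure {u | ∃ (α β : Λ) (h : α < β), (α, β) ∈ Γ ∧ ∃ r : R, u = rootUnit h r}


/-- A subset `Γ ⊆ Φ` is closed if `(α,β),(β,γ) ∈ Γ` implies `(α,γ) ∈ Γ`. -/
def IsClosedSubset {Λ : Type*} [PartialOrder Λ] (Γ : Set (Λ × Λ)) : Prop :=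
  ∀ α β γ : Λ, (α, β) ∈ Γ → (β, γ) ∈ Γ → (α, γ) ∈ Γ

/-- `Γ` is normal in `Γ₁`. -/
def IsNormalIn {Λ : Type*} [PartialOrder Λ] (Γ Γ₁ : Set (Λ × Λ)) : Prop :=
  (∀ α β γ : Λ, (α, β) ∈ Γ → (β, γ) ∈ Γ₁ → (α, γ) ∈ Γ) ∧
  (∀ α β γ : Λ, (α, β) ∈ Γ₁ → (β, γ) ∈ Γ → (α, γ) ∈ Γ)

section Aux
set_option linter.unusedSectionVars false
variable {R : Type*} [Ring R] {Λ : Type*} [PartialOrder Λ]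


lemma elt_apply (α β : Λ) (r : R) (f : Λ →₀ R) :
    elt α β r f = Finsupp.single α (r * f β) := rfl

lemma elt_mul_same (α β δ : Λ) (r s : R) :
    (elt α β r : E R Λ) * elt β δ s = elt α δ (r * s) := by
  apply LinearMap.ext; intro f
  simp [Module.End.mul_apply, elt_apply, mul_assoc]

lemma elt_mul_ne (α β γ δ : Λ) (r s : R) (h : β ≠ γ) :
    (elt α β r : E R Λ) * elt γ δ s = 0 := by
  apply LinearMap.ext; intro f
  simp [Module.End.mul_apply, elt_apply, Finsupp.single_apply, Ne.symm h]

lemma elt_add (α β : Λ) (r s : R) : (elt α β r : E R Λ) + elt α β s = elt α β (r + s) := by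
  apply LinearMap.ext; intro f
  simp [elt_apply, add_mul, Finsupp.single_add]

lemma elt_zero (α β : Λ) : (elt α β (0 : R) : E R Λ) = 0 := by
  apply LinearMap.ext; intro f
  simp [elt_apply]



lemma rootUnit_val {α β : Λ} (h : α < β) (r : R) :
    (rootUnit h r : (E R Λ)ˣ).val = 1 + elt α β r := rfl

lemma rootUnit_inv_eq {α β : Λ} (h : α < β) (r : R) :
    (rootUnit h r : (E R Λ)ˣ)⁻¹ = rootUnit h (-r) := by
  apply Units.ext; rfl

lemma expand3 (x a y : E R Λ) :
    (1 + x) * (1 + a) * (1 + y)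
      = 1 + a + (x + y) + x * a + a * y + x * y + x * a * y := by
  noncomm_ring

lemma expand2 (a b : E R Λ) : (1 + a) * (1 + b) = 1 + a + b + a * b := by
  noncomm_ring

lemma rootUnit_mem {Γ : Set (Λ × Λ)} {α β : Λ} (h : α < β) (hmem : (α, β) ∈ Γ) (r : R) :
    rootUnit h r ∈ patternSubgroup R Λ Γ :=
  Subgroup.subset_closure ⟨α, β, h, hmem, r, rfl⟩

/-- Conjugating a generator of `M(Γ)` by a generator of `M(Γ₁)` stays in `M(Γ)`. -/
lemma conj_gen_mem {Γ Γ₁ : Set (Λ × Λ)} (hnorm : IsNormalIn Γ Γ₁)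
    {α β γ δ : Λ} (h₁ : α < β) (h₂ : γ < δ) (hab : (α, β) ∈ Γ₁) (hgd : (γ, δ) ∈ Γ)
    (r s : R) :
    rootUnit h₁ r * rootUnit h₂ s * (rootUnit h₁ r)⁻¹ ∈ patternSubgroup R Λ Γ := by
  rw [rootUnit_inv_eq]
  by_cases hbc : β = γ
  · subst hbc
    have key : rootUnit h₁ r * rootUnit h₂ s * rootUnit h₁ (-r)
        = rootUnit h₂ s * rootUnit (h₁.trans h₂) (r * s) := by
      apply Units.ext
      show (1 + elt α β r) * (1 + elt β δ s) * (1 + elt α β (-r))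
          = (1 + elt β δ s) * (1 + elt α δ (r * s))
      rw [expand3, expand2, elt_add, add_neg_cancel, elt_zero,
        elt_mul_same, elt_mul_ne β δ α β s (-r) (h₁.trans h₂).ne',
        elt_mul_ne α β α β r (-r) h₁.ne',
        elt_mul_ne α δ α β (r * s) (-r) (h₁.trans h₂).ne',
        elt_mul_ne β δ α δ s (r * s) (h₁.trans h₂).ne']
      simp
    rw [key]
    exact mul_mem (rootUnit_mem h₂ hgd s)
      (rootUnit_mem (h₁.trans h₂) (hnorm.2 α β δ hab hgd) (r * s))
  · by_cases hda : δ = α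
    · subst hda
      have key : rootUnit h₁ r * rootUnit h₂ s * rootUnit h₁ (-r)
          = rootUnit h₂ s * rootUnit (h₂.trans h₁) (s * -r) := by
        apply Units.ext
        show (1 + elt δ β r) * (1 + elt γ δ s) * (1 + elt δ β (-r))
            = (1 + elt γ δ s) * (1 + elt γ β (s * -r))
        rw [expand3, expand2, elt_add, add_neg_cancel, elt_zero,
          elt_mul_ne δ β γ δ r s hbc, elt_mul_same γ δ β s (-r),
          elt_mul_ne δ β δ β r (-r) h₁.ne',
          elt_mul_ne γ δ γ β s (s * -r) h₂.ne']
        simp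
      rw [key]
      exact mul_mem (rootUnit_mem h₂ hgd s)
        (rootUnit_mem (h₂.trans h₁) (hnorm.1 γ δ β hgd hab) (s * -r))
    · have key : rootUnit h₁ r * rootUnit h₂ s * rootUnit h₁ (-r) = rootUnit h₂ s := by
        apply Units.ext
        show (1 + elt α β r) * (1 + elt γ δ s) * (1 + elt α β (-r)) = 1 + elt γ δ s
        rw [expand3, elt_add, add_neg_cancel, elt_zero,
          elt_mul_ne α β γ δ r s hbc, elt_mul_ne γ δ α β s (-r) hda,
          elt_mul_ne α β α β r (-r) h₁.ne']
        simp
      rw [key]; exact rootUnit_mem h₂ hgd s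
/-- Conjugation by any element of `M(Γ₁)` preserves `M(Γ)`. -/
lemma conj_mem {Γ Γ₁ : Set (Λ × Λ)} (hnorm : IsNormalIn Γ Γ₁) {g : (E R Λ)ˣ}
    (hg : g ∈ patternSubgroup R Λ Γ₁) :
    ∀ n ∈ patternSubgroup R Λ Γ, g * n * g⁻¹ ∈ patternSubgroup R Λ Γ := by
  have main : ∀ g ∈ patternSubgroup R Λ Γ₁,
      (∀ n ∈ patternSubgroup R Λ Γ, g * n * g⁻¹ ∈ patternSubgroup R Λ Γ) ∧
      (∀ n ∈ patternSubgroup R Λ Γ, g⁻¹ * n * g ∈ patternSubgroup R Λ Γ) := by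
    intro g hg
    induction hg using Subgroup.closure_induction with
    | mem x hx =>
      obtain ⟨α, β, h, hab, r, rfl⟩ := hx
      constructor
      · intro n hn
        induction hn using Subgroup.closure_induction with
        | mem y hy =>
          obtain ⟨γ, δ, h', hgd, s, rfl⟩ := hy
          exact conj_gen_mem hnorm h h' hab hgd r s
        | one => simpa using one_mem _
        | mul y z _ _ hy hz =>
          have : rootUnit h r * (y * z) * (rootUnit h r)⁻¹
              = (rootUnit h r * y * (rootUnit h r)⁻¹) *
                (rootUnit h r * z * (rootUnit h r)⁻¹) := by group
          rw [this]; exact mul_mem hy hz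
        | inv y _ hy =>
          have : rootUnit h r * y⁻¹ * (rootUnit h r)⁻¹
              = (rootUnit h r * y * (rootUnit h r)⁻¹)⁻¹ := by group
          rw [this]; exact inv_mem hy
      · intro n hn
        rw [rootUnit_inv_eq]
        have h2 : ∀ n ∈ patternSubgroup R Λ Γ,
            rootUnit h (-r) * n * (rootUnit h (-r))⁻¹ ∈ patternSubgroup R Λ Γ := by
          intro m hm
          induction hm using Subgroup.closure_induction with
          | mem y hy =>
            obtain ⟨γ, δ, h', hgd, s, rfl⟩ := hy
            exact conj_gen_mem hnorm h h' hab hgd (-r) s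
          | one => simpa using one_mem _
          | mul y z _ _ hy hz =>
            have : rootUnit h (-r) * (y * z) * (rootUnit h (-r))⁻¹
                = (rootUnit h (-r) * y * (rootUnit h (-r))⁻¹) *
                  (rootUnit h (-r) * z * (rootUnit h (-r))⁻¹) := by group
            rw [this]; exact mul_mem hy hz
          | inv y _ hy =>
            have : rootUnit h (-r) * y⁻¹ * (rootUnit h (-r))⁻¹
                = (rootUnit h (-r) * y * (rootUnit h (-r))⁻¹)⁻¹ := by group
            rw [this]; exact inv_mem hy
        have := h2 n hn
        rwa [rootUnit_inv_eq, neg_neg] at this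
    | one => constructor <;> intro n hn <;> simpa using hn
    | mul x y _ _ hx hy =>
      constructor
      · intro n hn
        have : x * y * n * (x * y)⁻¹ = x * (y * n * y⁻¹) * x⁻¹ := by group
        rw [this]; exact hx.1 _ (hy.1 n hn)
      · intro n hn
        have : (x * y)⁻¹ * n * (x * y) = y⁻¹ * (x⁻¹ * n * x) * y := by group
        rw [this]; exact hy.2 _ (hx.2 n hn)
    | inv x _ hx =>
      refine ⟨fun n hn => ?_, fun n hn => ?_⟩
      · exact hx.2 n hn
      · have : (x⁻¹)⁻¹ * n * x⁻¹ = x * n * x⁻¹ := by group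
        rw [this]; exact hx.1 n hn
  exact (main g hg).1
/-- The additive group generated by the `elt`s of a pattern. -/
noncomputable def pattSpan (R : Type*) [Ring R] (Λ : Type*) [PartialOrder Λ]
    (Γ : Set (Λ × Λ)) : AddSubgroup (E R Λ) :=
  AddSubgroup.closure {f | ∃ (α β : Λ) (r : R), (α, β) ∈ Γ ∧ f = elt α β r}

lemma pattSpan_mul {Γ : Set (Λ × Λ)} (hΓ : IsClosedSubset Γ) :
    ∀ a ∈ pattSpan R Λ Γ, ∀ b ∈ pattSpan R Λ Γ, a * b ∈ pattSpan R Λ Γ := by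
  intro a ha
  induction ha using AddSubgroup.closure_induction with
  | mem x hx =>
    obtain ⟨α, β, r, hab, rfl⟩ := hx
    intro b hb
    induction hb using AddSubgroup.closure_induction with
    | mem y hy =>
      obtain ⟨γ, δ, s, hgd, rfl⟩ := hy
      by_cases h : β = γ
      · subst h
        rw [elt_mul_same]
        exact AddSubgroup.subset_closure ⟨α, δ, r * s, hΓ α β δ hab hgd, rfl⟩
      · rw [elt_mul_ne α β γ δ r s h]; exact zero_mem _
    | zero => rw [mul_zero]; exact zero_mem _
    | add y z _ _ hy hz => rw [mul_add]; exact add_mem hy hz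
    | neg y _ hy =>
      have e : elt α β r * -y = -(elt α β r * y) := LinearMap.comp_neg _ _
      rw [e]; exact neg_mem hy
  | zero => intro b hb; rw [zero_mul]; exact zero_mem _
  | add x y _ _ hx hy => intro b hb; rw [add_mul]; exact add_mem (hx b hb) (hy b hb)
  | neg x _ hx =>
    intro b hb
    have e : -x * b = -(x * b) := LinearMap.neg_comp _ _
    rw [e]; exact neg_mem (hx b hb)

/-- Every element of `M(Γ)` has the form `1 + a` with `a` in the span of the pattern. -/
lemma mem_one_add {Γ : Set (Λ × Λ)} (hΓ : IsClosedSubset Γ) {u : (E R Λ)ˣ}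
    (hu : u ∈ patternSubgroup R Λ Γ) :
    (∃ a ∈ pattSpan R Λ Γ, (u : E R Λ) = 1 + a) ∧
    (∃ b ∈ pattSpan R Λ Γ, (u.inv : E R Λ) = 1 + b) := by
  induction hu using Subgroup.closure_induction with
  | mem x hx =>
    obtain ⟨α, β, h, hab, r, rfl⟩ := hx
    exact ⟨⟨elt α β r, AddSubgroup.subset_closure ⟨α, β, r, hab, rfl⟩, rfl⟩,
      ⟨elt α β (-r), AddSubgroup.subset_closure ⟨α, β, -r, hab, rfl⟩, rfl⟩⟩
  | one => exact ⟨⟨0, zero_mem _, by simp⟩, ⟨0, zero_mem _, by simp⟩⟩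
  | mul x y _ _ hx hy =>
    obtain ⟨⟨a, ha, hva⟩, ⟨a', ha', hva'⟩⟩ := hx
    obtain ⟨⟨b, hb, hvb⟩, ⟨b', hb', hvb'⟩⟩ := hy
    constructor
    · refine ⟨a + b + a * b, add_mem (add_mem ha hb) (pattSpan_mul hΓ a ha b hb), ?_⟩
      rw [Units.val_mul, hva, hvb, expand2, add_assoc, add_assoc, add_assoc]
    · refine ⟨b' + a' + b' * a', add_mem (add_mem hb' ha') (pattSpan_mul hΓ b' hb' a' ha'), ?_⟩
      show y.inv * x.inv = _
      rw [hvb', hva', expand2, add_assoc, add_assoc, add_assoc]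
  | inv x _ hx =>
    obtain ⟨⟨a, ha, hva⟩, ⟨a', ha', hva'⟩⟩ := hx
    exact ⟨⟨a', ha', hva'⟩, ⟨a, ha, hva⟩⟩
lemma coeff_eq_zero {Γ : Set (Λ × Λ)} {α γ : Λ} (hne : (α, γ) ∉ Γ) :
    ∀ a ∈ pattSpan R Λ Γ, (a (Finsupp.single γ (1 : R))) α = 0 := by
  intro a ha
  induction ha using AddSubgroup.closure_induction with
  | mem x hx =>
    obtain ⟨α', β', r, hm, rfl⟩ := hx
    classical
    by_cases h2 : β' = γ
    · subst h2
      by_cases h1 : α' = α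
      · subst h1; exact absurd hm hne
      · simp [elt_apply, Finsupp.single_apply, h1]
    · simp [elt_apply, Finsupp.single_apply, (Ne.symm h2 : γ ≠ β')]
  | zero => simp
  | add x y _ _ hx hy => rw [LinearMap.add_apply, Finsupp.add_apply, hx, hy, add_zero]
  | neg x _ hx => rw [LinearMap.neg_apply, Finsupp.neg_apply, hx, neg_zero]


end Aux

/-- For closed `Γ ⊆ Γ₁ ⊆ Φ`, the pattern subgroup `M(Γ)` is normal
in `M(Γ₁)` if and only if `Γ` is normal in `Γ₁`. -/
theorem patternSubgroup_normal_iff (R : Type*) [Ring R] [Nontrivial R]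
    (Λ : Type*) [PartialOrder Λ] (Γ Γ₁ : Set (Λ × Λ))
    (hΦ : Γ₁ ⊆ {p : Λ × Λ | p.1 < p.2}) (hsub : Γ ⊆ Γ₁)
    (hΓ : IsClosedSubset Γ) (hΓ₁ : IsClosedSubset Γ₁) :
    ((patternSubgroup R Λ Γ).subgroupOf (patternSubgroup R Λ Γ₁)).Normal ↔
      IsNormalIn Γ Γ₁ := by
  classical
  constructor
  · intro hN
    constructor
    · -- (α,β) ∈ Γ, (β,γ) ∈ Γ₁ → (α,γ) ∈ Γ
      intro α β γ hab hbg
      have h1 : α < β := hΦ (hsub hab)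
      have h2 : β < γ := hΦ hbg
      set gK : (patternSubgroup R Λ Γ₁) := ⟨rootUnit h2 1, rootUnit_mem h2 hbg 1⟩ with hgK
      set nK : (patternSubgroup R Λ Γ₁) :=
        ⟨rootUnit h1 1, rootUnit_mem h1 (hsub hab) 1⟩ with hnK
      have hnH : nK ∈ (patternSubgroup R Λ Γ).subgroupOf (patternSubgroup R Λ Γ₁) :=
        Subgroup.mem_subgroupOf.mpr (rootUnit_mem h1 hab 1)
      have hmem := hN.conj_mem nK hnH gK
      rw [Subgroup.mem_subgroupOf] at hmem
      have hw : (rootUnit h2 1 * rootUnit h1 1 * (rootUnit h2 1)⁻¹ : (E R Λ)ˣ)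
          ∈ patternSubgroup R Λ Γ := hmem
      set w : (E R Λ)ˣ := rootUnit h2 1 * rootUnit h1 1 * (rootUnit h2 1)⁻¹ with hwdef
      have hval : (w : E R Λ) = 1 + elt α β 1 + elt α γ (1 * (-1) : R) := by
        have : (w : E R Λ)
            = (1 + elt β γ (1:R)) * (1 + elt α β (1:R)) * (1 + elt β γ (-1:R)) := by
          rw [hwdef, rootUnit_inv_eq]; rfl
        rw [this, expand3, elt_add, add_neg_cancel, elt_zero,
          elt_mul_ne β γ α β (1:R) 1 (h1.trans h2).ne',
          elt_mul_same α β γ (1:R) (-1),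
          elt_mul_ne β γ β γ (1:R) (-1) h2.ne', zero_mul]
        simp only [add_zero, zero_mul]
      by_contra hag
      obtain ⟨⟨a, haS, ha⟩, -⟩ := mem_one_add hΓ hw
      have e0 : ((w : E R Λ) (Finsupp.single γ (1:R))) α = 0 := by
        rw [ha, LinearMap.add_apply, Finsupp.add_apply, Module.End.one_apply,
          coeff_eq_zero hag a haS, Finsupp.single_apply,
          if_neg (h1.trans h2).ne', add_zero]
      rw [hval] at e0
      simp [LinearMap.add_apply, Finsupp.add_apply, Module.End.one_apply,
        elt_apply, Finsupp.single_apply, (h1.trans h2).ne', h2.ne'] at e0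
    · -- (α,β) ∈ Γ₁, (β,γ) ∈ Γ → (α,γ) ∈ Γ
      intro α β γ hab hbg
      have h1 : α < β := hΦ hab
      have h2 : β < γ := hΦ (hsub hbg)
      set gK : (patternSubgroup R Λ Γ₁) := ⟨rootUnit h1 1, rootUnit_mem h1 hab 1⟩ with hgK
      set nK : (patternSubgroup R Λ Γ₁) :=
        ⟨rootUnit h2 1, rootUnit_mem h2 (hsub hbg) 1⟩ with hnK
      have hnH : nK ∈ (patternSubgroup R Λ Γ).subgroupOf (patternSubgroup R Λ Γ₁) :=
        Subgroup.mem_subgroupOf.mpr (rootUnit_mem h2 hbg 1)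
      have hmem := hN.conj_mem nK hnH gK
      rw [Subgroup.mem_subgroupOf] at hmem
      have hw : (rootUnit h1 1 * rootUnit h2 1 * (rootUnit h1 1)⁻¹ : (E R Λ)ˣ)
          ∈ patternSubgroup R Λ Γ := hmem
      set w : (E R Λ)ˣ := rootUnit h1 1 * rootUnit h2 1 * (rootUnit h1 1)⁻¹ with hwdef
      have hval : (w : E R Λ) = 1 + elt β γ 1 + elt α γ ((1 : R) * 1) := by
        have : (w : E R Λ)
            = (1 + elt α β (1:R)) * (1 + elt β γ (1:R)) * (1 + elt α β (-1:R)) := by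
          rw [hwdef, rootUnit_inv_eq]; rfl
        rw [this, expand3, elt_add, add_neg_cancel, elt_zero,
          elt_mul_same α β γ (1:R) 1,
          elt_mul_ne β γ α β (1:R) (-1) (h1.trans h2).ne',
          elt_mul_ne α β α β (1:R) (-1) h1.ne',
          elt_mul_ne α γ α β ((1:R) * 1) (-1) (h1.trans h2).ne']
        simp only [add_zero, zero_mul]
      by_contra hag
      obtain ⟨⟨a, haS, ha⟩, -⟩ := mem_one_add hΓ hw
      have e0 : ((w : E R Λ) (Finsupp.single γ (1:R))) α = 0 := by
        rw [ha, LinearMap.add_apply, Finsupp.add_apply, Module.End.one_apply,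
          coeff_eq_zero hag a haS, Finsupp.single_apply,
          if_neg (h1.trans h2).ne', add_zero]
      rw [hval] at e0
      simp [LinearMap.add_apply, Finsupp.add_apply, Module.End.one_apply,
        elt_apply, Finsupp.single_apply, (h1.trans h2).ne', h1.ne'] at e0
  · intro hnorm
    constructor
    intro n hn g
    rw [Subgroup.mem_subgroupOf] at hn ⊢
    have : ((g * n * g⁻¹ : patternSubgroup R Λ Γ₁) : (E R Λ)ˣ)
        = (g : (E R Λ)ˣ) * n * (g : (E R Λ)ˣ)⁻¹ := rfl
    rw [this]
    exact conj_mem hnorm g.2 n hn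

end McLain
end

section
/- Suppose ≤ is a total order on Λ. Every element g of a pattern subgroup M(Γ) of the McLain group, written uniquely as g = 1 + Σ_{(α,β)∈S(g)} r_{αβ} e_{αβ} with finite S(g) ⊆ Γ and nonzero r_{αβ} ∈ R, equals the product of the factors (1 + r_{αβ} e_{αβ}) taken in decreasing order with respect to the total order ⪯ on Φ defined by (α,β) ⪯ (γ,δ) iff β < δ, or β = δ and α ≤ γ. -/
namespace McLain

/-- The total order `⪯` on `Φ`: `(α,β) ⪯ (γ,δ)` iff `β < δ`, or `β = δ` and `α ≤ γ`. -/
def ple {Λ : Type*} [LinearOrder Λ] (p q : Λ × Λ) : Prop :=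
  p.2 < q.2 ∨ (p.2 = q.2 ∧ p.1 ≤ q.1)

lemma elt_mul_elt_eq_zero {R : Type*} [Ring R] {Λ : Type*} [DecidableEq Λ]
    (α β γ δ : Λ) (hβγ : β ≠ γ) (r s : R) :
    (elt α β r * elt γ δ s : E R Λ) = 0 := by
  apply LinearMap.ext; intro x
  simp [elt, lmul, Module.End.mul_apply, Finsupp.single_apply, Ne.symm hβγ]

lemma prod_one_add_elt {R : Type*} [Ring R] {Λ : Type*} [LinearOrder Λ]
    (r : Λ × Λ → R) :
    ∀ (l : List (Λ × Λ)), (∀ p ∈ l, p.1 < p.2) → l.Pairwise (fun p q => ple q p) →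
      ((l.map fun p => 1 + elt p.1 p.2 (r p)).prod : E R Λ) =
        1 + (l.map fun p => elt p.1 p.2 (r p)).sum
  | [], _, _ => by simp
  | h :: t, hlt, hsorted => by
    have ih := prod_one_add_elt r t (fun p hp => hlt p (List.mem_cons_of_mem _ hp))
      hsorted.of_cons
    have hz : (elt h.1 h.2 (r h) : E R Λ) * (t.map fun p => elt p.1 p.2 (r p)).sum = 0 := by
      show (AddMonoidHom.mulLeft (elt h.1 h.2 (r h))) (t.map fun p => elt p.1 p.2 (r p)).sum = 0
      rw [map_list_sum]
      apply List.sum_eq_zero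
      intro x hx
      simp only [List.map_map, List.mem_map, Function.comp] at hx
      obtain ⟨q, hq, rfl⟩ := hx
      have hle : ple q h := (List.pairwise_cons.1 hsorted).1 q hq
      have h1 : q.1 < q.2 := hlt q (List.mem_cons_of_mem _ hq)
      have h2 : q.2 ≤ h.2 := by rcases hle with h' | ⟨h', _⟩ <;> exact h'.le
      exact elt_mul_elt_eq_zero _ _ _ _ (fun he => absurd (he ▸ h2) (not_le.mpr h1)) _ _
    simp only [List.map_cons, List.prod_cons, List.sum_cons, ih]
    rw [add_mul, one_mul, mul_add, mul_one, hz]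
    abel

/-- Suppose `≤` is a total order on `Λ` and `Γ ⊆ Φ` is closed.  If
`g = 1 + ∑_{(α,β) ∈ S} r_{αβ} e_{αβ}` with `S ⊆ Γ` finite and all `r_{αβ} ≠ 0` (the
unique such expression for `g ∈ M(Γ)`), then `g` is the product of the factors
`1 + r_{αβ} e_{αβ}` taken in decreasing `⪯`-order.  Here `l` is the enumeration of
`S` in decreasing `⪯`-order. -/
theorem patternSubgroup_prod_decreasing (R : Type*) [Ring R] [Nontrivial R]
    (Λ : Type*) [LinearOrder Λ] (Γ : Set (Λ × Λ))
    (hΦ : Γ ⊆ {p : Λ × Λ | p.1 < p.2}) (hΓ : IsClosedSubset Γ)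
    (S : Finset (Λ × Λ)) (hS : ↑S ⊆ Γ)
    (r : Λ × Λ → R) (hr : ∀ p ∈ S, r p ≠ 0)
    (l : List (Λ × Λ)) (hlS : l.toFinset = S) (hnd : l.Nodup)
    (hsorted : l.Pairwise fun p q => ple q p)
    (hlt : ∀ p ∈ l, p.1 < p.2) :
    ((l.attach.map fun p => rootUnit (R := R) (hlt p.1 p.2) (r p.1)).prod : E R Λ) =
      1 + ∑ p ∈ S, elt p.1 p.2 (r p) := by
  have hcast : ((l.attach.map fun p => rootUnit (R := R) (hlt p.1 p.2) (r p.1)).prod : E R Λ)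
      = ((l.map fun p => 1 + elt p.1 p.2 (r p)).prod : E R Λ) := by
    rw [show ((l.attach.map fun p => rootUnit (R := R) (hlt p.1 p.2) (r p.1)).prod : E R Λ)
        = (Units.coeHom (E R Λ)) (l.attach.map fun p => rootUnit (hlt p.1 p.2) (r p.1)).prod
        from rfl, map_list_prod]
    congr 1
    rw [List.map_map]
    have : (Units.coeHom (E R Λ)) ∘ (fun p : {x // x ∈ l} => rootUnit (hlt p.1 p.2) (r p.1))
        = (fun p : Λ × Λ => (1 + elt p.1 p.2 (r p) : E R Λ)) ∘ Subtype.val := by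
      funext p; rfl
    rw [this, ← List.map_map, List.attach_map_subtype_val]
  rw [hcast, prod_one_add_elt r l hlt hsorted]
  congr 1
  rw [← hlS]
  exact (List.sum_toFinset _ hnd).symm

end McLain
end

section
/- Let R be a ring admitting a right primitive linear character λ : R⁺ → F* (a group homomorphism from the additive group of R to the multiplicative group of a field F whose kernel contains no nonzero right ideal). If F has prime characteristic p, then the additive group R⁺ has no element of order p. -/
/-- `I` is a right ideal of `R` (as a set): closed under addition, negation,
contains `0`, and is closed under right multiplication by arbitrary ring elements. -/
def IsRightIdealSet {R : Type*} [Ring R] (I : Set R) : Prop :=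
  (0 : R) ∈ I ∧ (∀ a ∈ I, ∀ b ∈ I, a + b ∈ I) ∧ (∀ a ∈ I, -a ∈ I) ∧
    (∀ a ∈ I, ∀ r : R, a * r ∈ I)

/-- `l : R⁺ → F*` is a linear character: a homomorphism from the additive group of `R`
to the multiplicative group of `F`. -/
def IsLinearCharacter {R : Type*} [Ring R] {F : Type*} [Field F] (l : R → Fˣ) : Prop :=
  ∀ a b : R, l (a + b) = l a * l b

/-- `l` is right primitive: the only right ideal of `R` contained in its kernel is `(0)`. -/
def IsRightPrimitive {R : Type*} [Ring R] {F : Type*} [Field F] (l : R → Fˣ) : Prop :=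
  ∀ I : Set R, IsRightIdealSet I → (∀ a ∈ I, l a = 1) → I = {0}

/-- If `R` admits a right primitive linear character `R⁺ → F*` and `F`
has prime characteristic `p`, then the additive group `R⁺` has no element of order `p`. -/
theorem no_element_of_order_char {R : Type*} [Ring R] {F : Type*} [Field F]
    (p : ℕ) [CharP F p] (hp : p.Prime)
    (l : R → Fˣ) (hl : IsLinearCharacter l) (hprim : IsRightPrimitive l) :
    ∀ r : R, addOrderOf r ≠ p := by
  intro r hr
  -- l 0 = 1
  have hl0 : l 0 = 1 := by
    have := hl 0 0
    rw [add_zero] at this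
    exact left_eq_mul.mp this
  -- l (n • x) = (l x)^n
  have hln : ∀ (n : ℕ) (x : R), l (n • x) = (l x) ^ n := by
    intro n x
    induction n with
    | zero => simpa using hl0
    | succ k ih => rw [succ_nsmul, hl, ih, pow_succ]
  -- the right ideal of p-torsion elements
  set I : Set R := {x | p • x = 0} with hI
  have hideal : IsRightIdealSet I := by
    refine ⟨by simp [hI], ?_, ?_, ?_⟩
    · intro a ha b hb
      simp only [hI, Set.mem_setOf_eq] at *
      rw [smul_add, ha, hb, add_zero]
    · intro a ha
      simp only [hI, Set.mem_setOf_eq] at *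
      rw [smul_neg, ha, neg_zero]
    · intro a ha s
      simp only [hI, Set.mem_setOf_eq] at *
      rw [← smul_mul_assoc, ha, zero_mul]
  have hker : ∀ a ∈ I, l a = 1 := by
    intro a ha
    have h1 : (l a) ^ p = 1 := by
      rw [← hln, ha, hl0]
    have hF : ((l a : F)) ^ p = 1 := by
      have := congrArg (Units.val) h1
      simpa using this
    haveI : Fact p.Prime := ⟨hp⟩
    have : ((l a : F) - 1) ^ p = 0 := by
      rw [sub_pow_char, hF, one_pow, sub_self]
    have : (l a : F) - 1 = 0 := pow_eq_zero_iff hp.ne_zero |>.mp this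
    ext
    simpa [sub_eq_zero] using this
  have hI0 := hprim I hideal hker
  have hrI : r ∈ I := by
    simp only [hI, Set.mem_setOf_eq]
    rw [← hr]
    exact addOrderOf_nsmul_eq_zero r
  rw [hI0] at hrI
  have : r = 0 := hrI
  rw [this] at hr
  simp at hr
  exact hp.ne_one hr.symm
end

section
/- Let R be a ring whose additive group R⁺ has finite exponent, and suppose R admits a right primitive linear character λ : R⁺ → F*. Then F* contains a root of unity of order exactly exp(R⁺). -/
private lemma linChar_zero {R : Type*} [Ring R] {F : Type*} [Field F] {l : R → Fˣ}
    (hl : IsLinearCharacter l) : l 0 = 1 := by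
  have := hl 0 0
  rw [add_zero] at this
  exact (left_eq_mul.mp this)

private lemma linChar_nsmul {R : Type*} [Ring R] {F : Type*} [Field F] {l : R → Fˣ}
    (hl : IsLinearCharacter l) (k : ℕ) (a : R) : l (k • a) = l a ^ k := by
  induction k with
  | zero => simpa using linChar_zero hl
  | succ k ih => rw [succ_nsmul, hl, ih, pow_succ]

/-- If the additive group `R⁺` has finite exponent and `R` admits a right
primitive linear character `R⁺ → F*`, then `F*` has a root of unity of order exactly
`exp(R⁺)`. -/
theorem exists_root_of_unity_of_exponent {R : Type*} [Ring R] {F : Type*} [Field F]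
    (hexp : AddMonoid.exponent R ≠ 0)
    (l : R → Fˣ) (hl : IsLinearCharacter l) (hprim : IsRightPrimitive l) :
    ∃ ζ : Fˣ, orderOf ζ = AddMonoid.exponent R := by
  set n := AddMonoid.exponent R with hn
  haveI : NeZero n := ⟨hexp⟩
  -- every value of l is an n-th root of unity
  have hmem : ∀ a : R, l a ∈ rootsOfUnity n F := by
    intro a
    rw [mem_rootsOfUnity, ← linChar_nsmul hl, AddMonoid.exponent_nsmul_eq_zero, linChar_zero hl]
  obtain ⟨g, hg⟩ := IsCyclic.exists_generator (α := rootsOfUnity n F)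
  set d := orderOf g with hd
  -- every n-th root of unity satisfies x ^ d = 1
  have hxd : ∀ x : rootsOfUnity n F, x ^ d = 1 := by
    intro x
    obtain ⟨m, hm⟩ := hg x
    rw [← hm, ← zpow_natCast, ← zpow_mul, mul_comm, zpow_mul, zpow_natCast, pow_orderOf_eq_one,
      one_zpow]
  -- d divides n since g ^ n = 1
  have hdn : d ∣ n := by
    apply orderOf_dvd_of_pow_eq_one
    have h1 : (g : Fˣ) ^ n = 1 := (mem_rootsOfUnity n (g : Fˣ)).mp g.2
    exact Subtype.ext (by rw [Subgroup.coe_pow]; exact h1)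
  -- the set d • R is a right ideal contained in ker l
  have hIdeal : IsRightIdealSet (Set.range fun a : R => d • a) :=
    ⟨⟨0, smul_zero d⟩,
     fun x ⟨a, ha⟩ y ⟨b, hb⟩ => ⟨a + b, by simp only [smul_add]; rw [show d • a = x from ha, show d • b = y from hb]⟩,
     fun x ⟨a, ha⟩ => ⟨-a, by simp only [smul_neg]; rw [show d • a = x from ha]⟩,
     fun x ⟨a, ha⟩ r => ⟨a * r, by rw [← show d • a = x from ha, smul_mul_assoc]⟩⟩
  have hker : ∀ x ∈ Set.range fun a : R => d • a, l x = 1 := by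
    rintro x ⟨a, rfl⟩
    have h1 := hxd ⟨l a, hmem a⟩
    rw [linChar_nsmul hl]
    exact congrArg Subtype.val h1
  have hI := hprim _ hIdeal hker
  have hId : ∀ a : R, d • a = 0 := by
    intro a
    have hmem' : d • a ∈ Set.range fun a : R => d • a := ⟨a, rfl⟩
    rw [hI] at hmem'
    exact hmem'
  have hnd : n ∣ d := AddMonoid.exponent_dvd_of_forall_nsmul_eq_zero hId
  have hdn' : d = n := Nat.dvd_antisymm hdn hnd
  refine ⟨(g : Fˣ), ?_⟩
  have hco : orderOf ((g : Fˣ)) = d :=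
    orderOf_injective (rootsOfUnity n F).subtype Subtype.coe_injective g
  rw [hco, hdn']
end

section
/- Let Λ be totally ordered, D = {(α₁,β₁),…,(α_m,β_m)} a basic subset of Φ (all α_i distinct and all β_i distinct), Γ = Φ \ ⋃_i [α_i,→,β_i) where [α,→,β) = {(α,γ) ∈ Φ : γ < β}, and Ω = {(α,γ) ∈ Φ : ∃(α,β),(γ,δ) ∈ D with α < γ < β < δ}. Then Γ₁ = Γ ∪ Ω is a closed subset of Φ, the union being disjoint. -/
/-- Let `Λ` be totally ordered and `D` a basic subset of
`Φ = {(α,β) : α < β}` (all first coordinates distinct, all second coordinates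
distinct).  With `Γ = Φ \ ⋃_{(α,β) ∈ D} [α,→,β)` where `[α,→,β) = {(α,γ) ∈ Φ : γ < β}`,
and `Ω = {(α,γ) ∈ Φ : ∃ (α,β),(γ,δ) ∈ D, α < γ < β < δ}`, the union `Γ₁ = Γ ∪ Ω` is
disjoint and `Γ₁` is a closed subset of `Φ`. -/
theorem gammaOne_closed {Λ : Type*} [LinearOrder Λ] (D : Finset (Λ × Λ))
    (hD : ∀ p ∈ D, p.1 < p.2)
    (hbasic₁ : ∀ p ∈ D, ∀ q ∈ D, p.1 = q.1 → p = q)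
    (hbasic₂ : ∀ p ∈ D, ∀ q ∈ D, p.2 = q.2 → p = q)
    (Γ Ω : Set (Λ × Λ))
    (hΓ : Γ = {p : Λ × Λ | p.1 < p.2 ∧ ¬ ∃ q ∈ D, p.1 = q.1 ∧ p.2 < q.2})
    (hΩ : Ω = {p : Λ × Λ | p.1 < p.2 ∧
      ∃ β δ : Λ, (p.1, β) ∈ D ∧ (p.2, δ) ∈ D ∧ p.2 < β ∧ β < δ}) :
    Disjoint Γ Ω ∧
      ∀ a b c : Λ, (a, b) ∈ Γ ∪ Ω → (b, c) ∈ Γ ∪ Ω → (a, c) ∈ Γ ∪ Ω := by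
  subst hΓ hΩ
  constructor
  · rw [Set.disjoint_left]
    rintro ⟨a, b⟩ ⟨hab, hno⟩ ⟨-, β, δ, hβ, hδ, h1, h2⟩
    exact hno ⟨(a, β), hβ, rfl, h1⟩
  · rintro a b c (⟨hab, h1⟩ | ⟨hab, β, δ, hβ, hδ, h1, h2⟩)
      (⟨hbc, h3⟩ | ⟨hbc, β', δ', hβ', hδ', h3, h4⟩)
    · exact Or.inl ⟨hab.trans hbc, fun ⟨q, hq, he, hlt⟩ =>
        h1 ⟨q, hq, he, hbc.trans hlt⟩⟩
    · exact Or.inl ⟨hab.trans hbc, fun ⟨q, hq, he, hlt⟩ =>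
        h1 ⟨q, hq, he, hbc.trans hlt⟩⟩
    · -- (a,b) ∈ Ω, (b,c) ∈ Γ
      have hδc : δ ≤ c := le_of_not_gt fun h => h3 ⟨(b, δ), hδ, rfl, h⟩
      refine Or.inl ⟨hab.trans hbc, ?_⟩
      rintro ⟨q, hq, he, hlt⟩
      have := hbasic₁ (a, β) hβ q hq (by simpa using he.symm ▸ rfl)
      have hqβ : q.2 = β := by rw [← this]
      rw [hqβ] at hlt
      exact absurd hlt (not_lt.mpr ((h2.trans_le hδc).le))
    · -- both in Ω
      have hδβ' : (b, δ) = (b, β') := hbasic₁ (b, δ) hδ (b, β') hβ' rfl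
      have hδβ'' : δ = β' := congrArg Prod.snd hδβ'
      rcases lt_or_ge c β with hc | hc
      · exact Or.inr ⟨hab.trans hbc, β, δ', hβ, hδ', hc,
          h2.trans (hδβ'' ▸ h4)⟩
      · refine Or.inl ⟨hab.trans hbc, ?_⟩
        rintro ⟨q, hq, he, hlt⟩
        have := hbasic₁ (a, β) hβ q hq (by simpa using he.symm ▸ rfl)
        have hqβ : q.2 = β := by rw [← this]
        rw [hqβ] at hlt
        exact absurd hlt (not_lt.mpr hc)
end

section
/- With Λ totally ordered, D a basic subset of Φ, and Ω, Γ, Γ₁ = Γ ∪ Ω as above: [Γ₁,Γ₁] ∩ D = [Ω,Ω] ∩ D, and these intersections are nonempty if and only if D contains a special triple, i.e., a subset {(α₁,β₁),(α₂,β₂),(α₃,β₃)} ⊆ D with α₁ < α₂ < α₃ = β₁ < β₂ < β₃. -/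
/-- `[Δ,Δ]`: the set of pairs `(α,β)` joined by a chain of at least two links of `Δ`. -/
def chainSet {Λ : Type*} (Δ : Set (Λ × Λ)) : Set (Λ × Λ) :=
  {p | ∃ (n : ℕ) (c : Fin (n + 3) → Λ), c 0 = p.1 ∧ c (Fin.last (n + 2)) = p.2 ∧
    ∀ i : Fin (n + 2), (c i.castSucc, c i.succ) ∈ Δ}

/-- `D` has a special triple: `{(α₁,β₁),(α₂,β₂),(α₃,β₃)} ⊆ D` with
`α₁ < α₂ < α₃ = β₁ < β₂ < β₃`. -/
def HasSpecialTriple {Λ : Type*} [LinearOrder Λ] (D : Finset (Λ × Λ)) : Prop :=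
  ∃ p ∈ D, ∃ q ∈ D, ∃ s ∈ D,
    p.1 < q.1 ∧ q.1 < s.1 ∧ s.1 = p.2 ∧ p.2 < q.2 ∧ q.2 < s.2

theorem chainSet_mono {Λ : Type*} {Δ Δ' : Set (Λ × Λ)} (h : Δ ⊆ Δ') :
    chainSet Δ ⊆ chainSet Δ' := by
  rintro p ⟨n, c, h0, h1, h2⟩
  exact ⟨n, c, h0, h1, fun i => h (h2 i)⟩

theorem key {Λ : Type*} [LinearOrder Λ] (D : Finset (Λ × Λ))
    (hbasic₁ : ∀ p ∈ D, ∀ q ∈ D, p.1 = q.1 → p = q)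
    (p : Λ × Λ) (hpD : p ∈ D)
    (hp : p ∈ chainSet ({x : Λ × Λ | x.1 < x.2 ∧ ¬ ∃ q ∈ D, x.1 = q.1 ∧ x.2 < q.2} ∪
      {x : Λ × Λ | x.1 < x.2 ∧ ∃ β δ : Λ, (x.1, β) ∈ D ∧ (x.2, δ) ∈ D ∧ x.2 < β ∧ β < δ})) :
    ∃ q ∈ D, ∃ s ∈ D, p.1 < q.1 ∧ q.1 < s.1 ∧ s.1 = p.2 ∧ p.2 < q.2 ∧ q.2 < s.2 := by
  obtain ⟨n, c, h0, hlast, hmem⟩ := hp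
  have hmono : StrictMono c := by
    rw [Fin.strictMono_iff_lt_succ]
    intro i
    rcases hmem i with h | h
    · exact h.1
    · exact h.1
  have hlast' : c ⟨n + 2, by omega⟩ = p.2 := hlast
  -- every point is ≤ p.2
  have hle : ∀ i : ℕ, (h : i ≤ n + 2) → c ⟨i, by omega⟩ ≤ p.2 := by
    intro i h
    rw [← hlast']
    exact hmono.monotone (by simp [Fin.mk_le_mk]; omega)
  have hlt : ∀ i : ℕ, (h : i < n + 2) → c ⟨i, by omega⟩ < p.2 := by
    intro i h
    rw [← hlast']
    exact hmono (by simp [Fin.mk_lt_mk]; omega)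
  -- if link k has an Ω-witness on the left, it is an Ω link
  have linkΩ : ∀ k : ℕ, (hk : k < n + 2) → ∀ δ, (c ⟨k, by omega⟩, δ) ∈ D →
      c ⟨k + 1, by omega⟩ < δ →
      ∃ β' δ', (c ⟨k, by omega⟩, β') ∈ D ∧ (c ⟨k + 1, by omega⟩, δ') ∈ D ∧
        c ⟨k + 1, by omega⟩ < β' ∧ β' < δ' := by
    intro k hk δ hδD hδlt
    have := hmem ⟨k, hk⟩
    rcases this with h | h
    · exact absurd ⟨(c ⟨k, by omega⟩, δ), hδD, rfl, hδlt⟩ h.2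
    · exact h.2
  -- main invariant
  have main : ∀ i : ℕ, 1 ≤ i → (h2 : i ≤ n + 2) →
      ∃ δ₁ δᵢ, (c ⟨1, by omega⟩, δ₁) ∈ D ∧ (c ⟨i, by omega⟩, δᵢ) ∈ D ∧ p.2 < δ₁ ∧ δ₁ ≤ δᵢ ∧
        (2 ≤ i → δ₁ < δᵢ) := by
    intro i
    induction i with
    | zero => omega
    | succ k ih =>
      intro _ h2
      rcases Nat.eq_zero_or_pos k with rfl | hk1
      · -- base case: link 0
        obtain ⟨β', δ', hβ'D, hδ'D, hlt1, hlt2⟩ :=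
          linkΩ 0 (by omega) p.2
            (by
              have h00 : (⟨0, by omega⟩ : Fin (n + 3)) = 0 := by ext; simp
              rw [h00, h0]; simpa using hpD)
            (hlt 1 (by omega))
        have : (c (⟨0, by omega⟩ : Fin (n + 3)), β') = p := by
          apply hbasic₁ _ hβ'D _ hpD
          simp [h0]
        have hβ' : β' = p.2 := congrArg Prod.snd this
        subst hβ'
        exact ⟨δ', δ', hδ'D, hδ'D, hlt2, le_rfl, by omega⟩
      · -- inductive step: link k, with 1 ≤ k ≤ n + 1
        obtain ⟨δ₁, δᵢ, hδ₁D, hδᵢD, hpδ₁, hδ₁δᵢ, _⟩ := ih hk1 (by omega)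
        have hklt : k < n + 2 := by omega
        have hwit : c ⟨k + 1, by omega⟩ < δᵢ :=
          lt_of_le_of_lt (hle (k + 1) (by omega)) (lt_of_lt_of_le hpδ₁ hδ₁δᵢ)
        obtain ⟨β', δ', hβ'D, hδ'D, hlt1, hlt2⟩ := linkΩ k hklt δᵢ hδᵢD hwit
        have : (c ⟨k, by omega⟩, β') = (c ⟨k, by omega⟩, δᵢ) :=
          hbasic₁ _ hβ'D _ hδᵢD rfl
        have hβ' : β' = δᵢ := congrArg Prod.snd this
        subst hβ'
        exact ⟨δ₁, δ', hδ₁D, hδ'D, hpδ₁, le_of_lt (lt_of_le_of_lt hδ₁δᵢ hlt2),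
          fun _ => lt_of_le_of_lt hδ₁δᵢ hlt2⟩
  obtain ⟨δ₁, δₙ, hδ₁D, hδₙD, hpδ₁, _, hδ₁δₙ⟩ := main (n + 2) (by omega) le_rfl
  refine ⟨(c ⟨1, by omega⟩, δ₁), hδ₁D, (c ⟨n + 2, by omega⟩, δₙ), hδₙD, ?_, ?_, ?_, hpδ₁,
    hδ₁δₙ (by omega)⟩
  · rw [← h0]; exact hmono (by rw [Fin.lt_def]; simp)
  · exact hmono (by rw [Fin.lt_def]; simp [Nat.mod_eq_of_lt])
  · exact hlast'

theorem key2 {Λ : Type*} [LinearOrder Λ] (D : Finset (Λ × Λ))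
    (p : Λ × Λ) (hpD : p ∈ D)
    (h : ∃ q ∈ D, ∃ s ∈ D, p.1 < q.1 ∧ q.1 < s.1 ∧ s.1 = p.2 ∧ p.2 < q.2 ∧ q.2 < s.2) :
    p ∈ chainSet {x : Λ × Λ | x.1 < x.2 ∧
      ∃ β δ : Λ, (x.1, β) ∈ D ∧ (x.2, δ) ∈ D ∧ x.2 < β ∧ β < δ} := by
  obtain ⟨q, hqD, s, hsD, h1, h2, h3, h4, h5⟩ := h
  refine ⟨0, ![p.1, q.1, s.1], rfl, h3, ?_⟩
  intro i
  fin_cases i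
  · refine ⟨h1, p.2, q.2, ?_, ?_, h3 ▸ h2, h4⟩
    · simpa using hpD
    · simpa using hqD
  · refine ⟨h2, q.2, s.2, ?_, ?_, h3 ▸ h4, h5⟩
    · simpa using hqD
    · simpa using hsD

/-- With `Λ` totally ordered, `D` basic, and `Γ`, `Ω`, `Γ₁ = Γ ∪ Ω`
as usual: `[Γ₁,Γ₁] ∩ D = [Ω,Ω] ∩ D`, and these are nonempty iff `D` contains a
special triple. -/
theorem chainSet_inter_basic {Λ : Type*} [LinearOrder Λ] (D : Finset (Λ × Λ))
    (hD : ∀ p ∈ D, p.1 < p.2)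
    (hbasic₁ : ∀ p ∈ D, ∀ q ∈ D, p.1 = q.1 → p = q)
    (hbasic₂ : ∀ p ∈ D, ∀ q ∈ D, p.2 = q.2 → p = q)
    (Γ Ω : Set (Λ × Λ))
    (hΓ : Γ = {p : Λ × Λ | p.1 < p.2 ∧ ¬ ∃ q ∈ D, p.1 = q.1 ∧ p.2 < q.2})
    (hΩ : Ω = {p : Λ × Λ | p.1 < p.2 ∧
      ∃ β δ : Λ, (p.1, β) ∈ D ∧ (p.2, δ) ∈ D ∧ p.2 < β ∧ β < δ}) :
    chainSet (Γ ∪ Ω) ∩ ↑D = chainSet Ω ∩ ↑D ∧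
      ((chainSet (Γ ∪ Ω) ∩ ↑D).Nonempty ↔ HasSpecialTriple D) := by
  subst hΓ hΩ
  constructor
  · apply Set.Subset.antisymm
    · rintro x ⟨hx, hxD⟩
      exact ⟨key2 D x (Finset.mem_coe.mp hxD) (key D hbasic₁ x (Finset.mem_coe.mp hxD) hx), hxD⟩
    · exact Set.inter_subset_inter_left _ (chainSet_mono Set.subset_union_right)
  · constructor
    · rintro ⟨x, hx, hxD⟩
      exact ⟨x, Finset.mem_coe.mp hxD, key D hbasic₁ x (Finset.mem_coe.mp hxD) hx⟩
    · rintro ⟨q0, hq0, h⟩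
      exact ⟨q0, chainSet_mono Set.subset_union_right (key2 D q0 hq0 h), hq0⟩
end
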